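/- Let n ≥ 2 be an integer and let ω ∈ ℝ with ω ≠ −1. For x ∈ ℝⁿ∖{0} and i,j ∈ {1,…,n}, let Γ_{n,ω,i}^j(x) ≡ ((ω+2)/(2(ω+1)))·δ_{ij}·S_n(x) − (ω/(2(ω+1)))·(1/s_n)·x_i x_j/|x|ⁿ. Then for every x ∈ ℝⁿ∖{0} and every j, the divergence of the j-th column satisfies Σ_{i=1}^n ∂Γ_{n,ω,i}^j/∂x_i (x) = (1/(ω+1))·(1/s_n)·x_j/|x|ⁿ, i.e., div Γ_{n,ω}^j = (1/(ω+1))·∂S_n/∂x_j on ℝⁿ∖{0}. -/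

import Mathlib

open MeasureTheory

/-- Partial derivative `∂f/∂x_i` of a scalar field on `ℝⁿ` (Euclidean). -/
noncomputable def pd {n : ℕ} (f : EuclideanSpace ℝ (Fin n) → ℝ) (i : Fin n)
    (x : EuclideanSpace ℝ (Fin n)) : ℝ :=
  fderiv ℝ f x (EuclideanSpace.single i 1)

/-- `s_n`, the `(n-1)`-dimensional measure of the unit sphere in `ℝⁿ`,
which equals `n` times the volume of the unit ball. -/
noncomputable def sphereMeas (n : ℕ) : ℝ :=
  (n : ℝ) * (volume (Metric.ball (0 : EuclideanSpace ℝ (Fin n)) 1)).toReal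

/-- `S_n`, the fundamental solution of the Laplacian in `ℝⁿ`. -/
noncomputable def fundSol (n : ℕ) (x : EuclideanSpace ℝ (Fin n)) : ℝ :=
  if n = 2 then (1 / sphereMeas n) * Real.log ‖x‖
  else (1 / ((2 - (n : ℝ)) * sphereMeas n)) * ‖x‖ ^ ((2 : ℝ) - n)

/-- The `(i,j)` entry `Γ_{n,ω,i}^j` of the Kelvin-type fundamental solution of the
Lamé operator. -/
noncomputable def kelvin (n : ℕ) (ω : ℝ) (i j : Fin n)
    (x : EuclideanSpace ℝ (Fin n)) : ℝ :=
  ((ω + 2) / (2 * (ω + 1))) * (if i = j then 1 else 0) * fundSol n x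
    - (ω / (2 * (ω + 1))) * (1 / sphereMeas n) * (x i * x j / ‖x‖ ^ n)

lemma sphereMeas_pos {n : ℕ} (hn : 2 ≤ n) : 0 < sphereMeas n := by
  have h1 : (0:ℝ) < n := by exact_mod_cast lt_of_lt_of_le two_pos hn
  have h2 := Metric.measure_ball_pos volume (0 : EuclideanSpace ℝ (Fin n)) one_pos
  have h3 : volume (Metric.ball (0 : EuclideanSpace ℝ (Fin n)) 1) ≠ ⊤ :=
    measure_ball_lt_top.ne
  exact mul_pos h1 (ENNReal.toReal_pos h2.ne' h3)

lemma hasFDerivAt_normSq {n : ℕ} (x : EuclideanSpace ℝ (Fin n)) :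
    HasFDerivAt (fun y : EuclideanSpace ℝ (Fin n) => ‖y‖ ^ 2) (2 • (innerSL ℝ x)) x := by
  simpa using (hasFDerivAt_id x).norm_sq

lemma hasFDerivAt_fundSol {n : ℕ} (hn : 2 ≤ n) (x : EuclideanSpace ℝ (Fin n)) (hx : x ≠ 0) :
    HasFDerivAt (fundSol n)
      (((1 / sphereMeas n) * (‖x‖ ^ 2) ^ (-(n : ℝ) / 2)) • (innerSL ℝ x)) x := by
  have hQx : (‖x‖ ^ 2 : ℝ) ≠ 0 := pow_ne_zero _ (norm_ne_zero_iff.mpr hx)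
  rcases eq_or_ne n 2 with h2 | h2
  · subst h2
    have h := ((hasFDerivAt_normSq x).log hQx).const_mul ((1 / sphereMeas 2) * 2⁻¹)
    have hf : fundSol 2 = fun y : EuclideanSpace ℝ (Fin 2) =>
        (1 / sphereMeas 2) * 2⁻¹ * Real.log (‖y‖ ^ 2) := by
      funext y
      simp only [fundSol, if_pos rfl, Real.log_pow]
      push_cast; ring
    rw [hf]
    refine h.congr_fderiv ?_
    ext v
    simp only [ContinuousLinearMap.smul_apply, smul_eq_mul]
    rw [show (-(2:ℕ):ℝ)/2 = -1 by norm_num, Real.rpow_neg_one]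
    ring
  · have hne : ((2:ℝ) - n) ≠ 0 := by
      have : (2:ℝ) < n := by
        have := lt_of_le_of_ne hn (Ne.symm h2)
        exact_mod_cast this
      linarith
    have h := ((hasFDerivAt_normSq x).rpow_const
      (p := ((2:ℝ) - n)/2) (Or.inl hQx)).const_mul (1 / ((2 - (n : ℝ)) * sphereMeas n))
    have hf : fundSol n = fun y : EuclideanSpace ℝ (Fin n) =>
        (1 / ((2 - (n : ℝ)) * sphereMeas n)) * (‖y‖ ^ 2) ^ (((2:ℝ) - n)/2) := by
      funext y
      simp only [fundSol, if_neg h2]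
      congr 1
      rw [← Real.rpow_natCast ‖y‖ 2, ← Real.rpow_mul (norm_nonneg y)]
      push_cast
      congr 1
      ring
    rw [hf]
    refine h.congr_fderiv ?_
    ext v
    simp only [ContinuousLinearMap.smul_apply, smul_eq_mul]
    rw [show ((2:ℝ) - n)/2 - 1 = -(n:ℝ)/2 by ring]
    have hs : sphereMeas n ≠ 0 := (sphereMeas_pos hn).ne'
    field_simp
    ring

lemma rpow_negn_eq {n : ℕ} (y : EuclideanSpace ℝ (Fin n)) :
    ((‖y‖ ^ 2 : ℝ)) ^ (-(n:ℝ)/2) = (‖y‖ ^ n)⁻¹ := by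
  rw [← Real.rpow_natCast ‖y‖ 2, ← Real.rpow_mul (norm_nonneg y),
    show ((2:ℕ):ℝ) * (-(n:ℝ)/2) = -(n:ℝ) by push_cast; ring,
    Real.rpow_neg (norm_nonneg y), Real.rpow_natCast]

lemma pd_kelvin {n : ℕ} (hn : 2 ≤ n) (ω : ℝ) (x : EuclideanSpace ℝ (Fin n)) (hx : x ≠ 0)
    (i j : Fin n) :
    pd (fun y => kelvin n ω i j y) i x =
      ((ω+2)/(2*(ω+1))) * (if i = j then 1 else 0) *
          ((1/sphereMeas n) * (‖x‖^2 : ℝ) ^ (-(n:ℝ)/2) * x i)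
        - (ω/(2*(ω+1))) * (1/sphereMeas n) *
          ((x j + (if i = j then 1 else 0) * x i) * (‖x‖^2 : ℝ) ^ (-(n:ℝ)/2)
            - (n:ℝ) * (x i * x i * x j) * (‖x‖^2 : ℝ) ^ (-(n:ℝ)/2 - 1)) := by
  have hQx : (‖x‖ ^ 2 : ℝ) ≠ 0 := pow_ne_zero _ (norm_ne_zero_iff.mpr hx)
  have hkel : (fun y => kelvin n ω i j y) = fun y : EuclideanSpace ℝ (Fin n) =>
      ((ω+2)/(2*(ω+1))) * (if i = j then (1:ℝ) else 0) * fundSol n y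
        - (ω/(2*(ω+1))) * (1/sphereMeas n) *
          (y i * y j * (‖y‖^2 : ℝ) ^ (-(n:ℝ)/2)) := by
    funext y
    simp only [kelvin, rpow_negn_eq y]
    ring
  have hi : HasFDerivAt (fun y : EuclideanSpace ℝ (Fin n) => y i)
      (EuclideanSpace.proj i : EuclideanSpace ℝ (Fin n) →L[ℝ] ℝ) x :=
    by simpa using (EuclideanSpace.proj (𝕜 := ℝ) i).hasFDerivAt (x := x)
  have hj : HasFDerivAt (fun y : EuclideanSpace ℝ (Fin n) => y j)
      (EuclideanSpace.proj j : EuclideanSpace ℝ (Fin n) →L[ℝ] ℝ) x :=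
    by simpa using (EuclideanSpace.proj (𝕜 := ℝ) j).hasFDerivAt (x := x)
  have hpow := (hasFDerivAt_normSq x).rpow_const (p := -(n:ℝ)/2) (Or.inl hQx)
  have hprod := (hi.mul hj).mul hpow
  have hfund := hasFDerivAt_fundSol hn x hx
  have hK := ((hfund.const_mul (((ω+2)/(2*(ω+1))) * (if i = j then (1:ℝ) else 0))).sub
    (hprod.const_mul ((ω/(2*(ω+1))) * (1/sphereMeas n))))
  simp only [Pi.mul_def, Pi.sub_def] at hK
  rw [← hkel] at hK
  unfold pd
  rw [hK.fderiv]
  simp only [ContinuousLinearMap.coe_sub', Pi.sub_apply, ContinuousLinearMap.smul_apply,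
    ContinuousLinearMap.add_apply, ContinuousLinearMap.coe_smul', Pi.smul_apply,
    innerSL_apply_apply, smul_eq_mul, PiLp.proj_apply, EuclideanSpace.single_apply]
  rw [EuclideanSpace.inner_single_right]
  simp only [RCLike.star_def, conj_trivial, EuclideanSpace.single_apply]
  rcases eq_or_ne i j with rfl | hij
  · simp only [if_pos rfl, if_true]
    ring
  · simp only [if_neg hij, if_neg (Ne.symm hij), if_true]
    ring

theorem div_kelvin_column (n : ℕ) (hn : 2 ≤ n) (ω : ℝ) (hω : ω ≠ -1)
    (x : EuclideanSpace ℝ (Fin n)) (hx : x ≠ 0) (j : Fin n) :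
    ∑ i : Fin n, pd (fun y => kelvin n ω i j y) i x
      = (1 / (ω + 1)) * (1 / sphereMeas n) * (x j / ‖x‖ ^ n) := by
  have hQx : (‖x‖ ^ 2 : ℝ) ≠ 0 := pow_ne_zero _ (norm_ne_zero_iff.mpr hx)
  have hs : sphereMeas n ≠ 0 := (sphereMeas_pos hn).ne'
  have hω1 : ω + 1 ≠ 0 := fun h => hω (by linarith)
  have hxx : ∑ i : Fin n, x i * x i = ‖x‖ ^ 2 := by
    rw [← real_inner_self_eq_norm_sq x]
    simp only [PiLp.inner_apply, RCLike.inner_apply, conj_trivial]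
  have htw : (‖x‖ ^ 2 : ℝ) * (‖x‖ ^ 2 : ℝ) ^ (-(n:ℝ)/2 - 1) = (‖x‖ ^ 2 : ℝ) ^ (-(n:ℝ)/2) := by
    nth_rewrite 2 [show -(n:ℝ)/2 = (-(n:ℝ)/2 - 1) + 1 by ring]
    rw [Real.rpow_add_one hQx]
    ring
  rw [Finset.sum_congr rfl (fun i _ => pd_kelvin hn ω x hx i j), Finset.sum_sub_distrib]
  have h1 : ∑ i : Fin n, ((ω+2)/(2*(ω+1))) * (if i = j then (1:ℝ) else 0) *
      ((1/sphereMeas n) * (‖x‖^2 : ℝ) ^ (-(n:ℝ)/2) * x i)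
      = ((ω+2)/(2*(ω+1))) * ((1/sphereMeas n) * (‖x‖^2 : ℝ) ^ (-(n:ℝ)/2) * x j) := by
    rw [Finset.sum_eq_single j]
    · simp
    · intro b _ hb; simp [hb]
    · simp
  have h2 : ∑ i : Fin n, (ω/(2*(ω+1))) * (1/sphereMeas n) *
      ((x j + (if i = j then (1:ℝ) else 0) * x i) * (‖x‖^2 : ℝ) ^ (-(n:ℝ)/2)
        - (n:ℝ) * (x i * x i * x j) * (‖x‖^2 : ℝ) ^ (-(n:ℝ)/2 - 1))
      = (ω/(2*(ω+1))) * (1/sphereMeas n) *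
        (((n:ℝ) * x j + x j) * (‖x‖^2 : ℝ) ^ (-(n:ℝ)/2)
          - (n:ℝ) * x j * ((‖x‖^2 : ℝ) * (‖x‖^2 : ℝ) ^ (-(n:ℝ)/2 - 1))) := by
    rw [← Finset.mul_sum]
    congr 1
    rw [Finset.sum_sub_distrib]
    congr 1
    · rw [← Finset.sum_mul]
      congr 1
      rw [Finset.sum_add_distrib]
      congr 1
      · simp [Finset.sum_const, Finset.card_univ, mul_comm]
      · rw [Finset.sum_eq_single j]
        · simp
        · intro b _ hb; simp [hb]
        · simp
    · have hfac : ∀ i : Fin n, (n:ℝ) * (x i * x i * x j) * (‖x‖^2 : ℝ) ^ (-(n:ℝ)/2 - 1)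
          = (x i * x i) * ((n:ℝ) * x j * (‖x‖^2 : ℝ) ^ (-(n:ℝ)/2 - 1)) := fun i => by ring
      rw [Finset.sum_congr rfl (fun i _ => hfac i), ← Finset.sum_mul, hxx]
      ring
  rw [h1, h2, htw, div_eq_mul_inv (x j), ← rpow_negn_eq x]
  field_simp
  ring
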